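/- For any real k ≠ 0 and nonzero real constants c, d, the function q(x,t) = -2kcd e^{-k²t}/(c² e^{kx} + d² e^{-kx}) satisfies the reverse-time nonlinear Schrödinger equation q_t(x,t) + q_{xx}(x,t) + 2 q(x,t)² q(x,-t) = 0 for all real x, t. -/

import Mathlib

theorem stmt_7 (k c d : ℝ) (hk : k ≠ 0) (hc : c ≠ 0) (hd : d ≠ 0)
    (q : ℝ → ℝ → ℝ)
    (hq : ∀ x t : ℝ, q x t =
      -2 * k * c * d * Real.exp (-k^2 * t) / (c^2 * Real.exp (k * x) + d^2 * Real.exp (-(k * x)))) :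
    ∀ x t : ℝ,
      deriv (fun s => q x s) t + iteratedDeriv 2 (fun y => q y t) x
        + 2 * (q x t)^2 * q x (-t) = 0 := by
  intro x t
  have hDpos : ∀ y : ℝ, 0 < c^2 * Real.exp (k*y) + d^2 * Real.exp (-(k*y)) := by
    intro y
    have h1 : 0 < c^2 := by positivity
    have h2 : 0 < d^2 := by positivity
    positivity
  have hDne : ∀ y : ℝ, c^2 * Real.exp (k*y) + d^2 * Real.exp (-(k*y)) ≠ 0 :=
    fun y => (hDpos y).ne'
  -- derivative of D
  have hD : ∀ y : ℝ, HasDerivAt (fun y => c^2 * Real.exp (k*y) + d^2 * Real.exp (-(k*y)))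
      (c^2 * Real.exp (k*y) * k + d^2 * Real.exp (-(k*y)) * (-k)) y := by
    intro y
    have h1 : HasDerivAt (fun y : ℝ => Real.exp (k*y)) (Real.exp (k*y) * k) y := by
      simpa using ((hasDerivAt_id y).const_mul k).exp
    have h2 : HasDerivAt (fun y : ℝ => Real.exp (-(k*y))) (Real.exp (-(k*y)) * (-k)) y := by
      have := (((hasDerivAt_id y).const_mul k).neg).exp
      simpa using this
    simpa [mul_assoc] using (h1.const_mul (c^2)).fun_add (h2.const_mul (d^2))
  set A : ℝ := -2 * k * c * d * Real.exp (-k^2 * t) with hA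
  -- first spatial derivative
  have hderiv1 : (deriv fun y => q y t) = fun y =>
      -A * (c^2 * Real.exp (k*y) * k + d^2 * Real.exp (-(k*y)) * (-k)) /
        (c^2 * Real.exp (k*y) + d^2 * Real.exp (-(k*y)))^2 := by
    funext y
    have h : HasDerivAt (fun y => q y t)
        (-A * (c^2 * Real.exp (k*y) * k + d^2 * Real.exp (-(k*y)) * (-k)) /
          (c^2 * Real.exp (k*y) + d^2 * Real.exp (-(k*y)))^2) y := by
      have hfun : (fun y => q y t) = fun y =>
          A / (c^2 * Real.exp (k*y) + d^2 * Real.exp (-(k*y))) := by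
        funext z; rw [hq]
      rw [hfun]
      have := (hasDerivAt_const y A).fun_div (hD y) (hDne y)
      refine this.congr_deriv ?_
      ring
    exact h.deriv
  -- second spatial derivative
  have hderiv2 : iteratedDeriv 2 (fun y => q y t) x =
      ((-A * (c^2 * Real.exp (k*x) * k * k + d^2 * Real.exp (-(k*x)) * k * k)) *
         (c^2 * Real.exp (k*x) + d^2 * Real.exp (-(k*x)))^2
        - (-A * (c^2 * Real.exp (k*x) * k + d^2 * Real.exp (-(k*x)) * (-k))) *
          (2 * (c^2 * Real.exp (k*x) + d^2 * Real.exp (-(k*x))) *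
            (c^2 * Real.exp (k*x) * k + d^2 * Real.exp (-(k*x)) * (-k)))) /
        ((c^2 * Real.exp (k*x) + d^2 * Real.exp (-(k*x)))^2)^2 := by
    rw [iteratedDeriv_succ, iteratedDeriv_one, hderiv1]
    have hnum : HasDerivAt (fun y => -A * (c^2 * Real.exp (k*y) * k + d^2 * Real.exp (-(k*y)) * (-k)))
        (-A * (c^2 * Real.exp (k*x) * k * k + d^2 * Real.exp (-(k*x)) * k * k)) x := by
      have h1 : HasDerivAt (fun y : ℝ => Real.exp (k*y)) (Real.exp (k*x) * k) x := by
        simpa using ((hasDerivAt_id x).const_mul k).exp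
      have h2 : HasDerivAt (fun y : ℝ => Real.exp (-(k*y))) (Real.exp (-(k*x)) * (-k)) x := by
        have := (((hasDerivAt_id x).const_mul k).neg).exp
        simpa using this
      have := (((h1.const_mul (c^2)).mul_const k).fun_add ((h2.const_mul (d^2)).mul_const (-k))).const_mul (-A)
      refine this.congr_deriv ?_
      ring
    have hden : HasDerivAt (fun y => (c^2 * Real.exp (k*y) + d^2 * Real.exp (-(k*y)))^2)
        (2 * (c^2 * Real.exp (k*x) + d^2 * Real.exp (-(k*x))) *
          (c^2 * Real.exp (k*x) * k + d^2 * Real.exp (-(k*x)) * (-k))) x := by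
      have := (hD x).fun_pow 2
      simpa [mul_assoc, mul_comm, mul_left_comm] using this
    have hdne : (c^2 * Real.exp (k*x) + d^2 * Real.exp (-(k*x)))^2 ≠ 0 := pow_ne_zero _ (hDne x)
    exact (hnum.div hden hdne).deriv
  -- time derivative
  have hderivt : deriv (fun s => q x s) t =
      (-2 * k * c * d * (Real.exp (-k^2 * t) * (-k^2))) /
        (c^2 * Real.exp (k*x) + d^2 * Real.exp (-(k*x))) := by
    have hfun : (fun s => q x s) = fun s =>
        -2 * k * c * d * Real.exp (-k^2 * s) / (c^2 * Real.exp (k*x) + d^2 * Real.exp (-(k*x))) := by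
      funext s; rw [hq]
    rw [hfun]
    have h1 : HasDerivAt (fun s : ℝ => Real.exp (-k^2 * s)) (Real.exp (-k^2 * t) * (-k^2)) t := by
      simpa using ((hasDerivAt_id t).const_mul (-k^2)).exp
    have := ((h1.const_mul (-2*k*c*d)).div_const (c^2 * Real.exp (k*x) + d^2 * Real.exp (-(k*x))))
    have h2 := this.deriv
    convert h2 using 1
  rw [hderivt, hderiv2, hq, hq]
  rw [hA]
  have hF : Real.exp (-(k*x)) = (Real.exp (k*x))⁻¹ := Real.exp_neg _
  have hS : Real.exp (-k^2 * -t) = (Real.exp (-k^2*t))⁻¹ := by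
    rw [← Real.exp_neg]; congr 1; ring
  have hDne' : c^2 * Real.exp (k*x) + d^2 * (Real.exp (k*x))⁻¹ ≠ 0 := by
    rw [← hF]; exact hDne x
  rw [hF, hS]
  field_simp
  ring
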